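/- arXiv:1604.02516 — 2 statements merged into one kernel-verified Lean document; each statement's English description precedes it below -/
import Mathlib

section
/- Let l = (p₀+q₀)/2 and j = |p×q|/g, where p₀ = √(1+|p|²), q₀ = √(1+|q|²) and g² = 2(p₀q₀ − p·q − 1) with g > 0. Then l² − j² = ((g²+4)/(4g²))|p−q|² and moreover l² − j² ≥ 1 + |p−q|²/4. -/
open scoped RealInnerProductSpace

noncomputable section

/-- Relativistic energy `p₀ = √(1+|p|²)`. -/
def en (p : EuclideanSpace ℝ (Fin 3)) : ℝ := Real.sqrt (1 + ‖p‖ ^ 2)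

/-- Relative momentum `g ≥ 0` with `g² = 2(p₀q₀ − p·q − 1)`. -/
def relg (p q : EuclideanSpace ℝ (Fin 3)) : ℝ :=
  Real.sqrt (2 * (en p * en q - ⟪p, q⟫ - 1))

/-- Euclidean norm of the cross product `|p × q|`. -/
def crossNorm (p q : EuclideanSpace ℝ (Fin 3)) : ℝ :=
  ‖(WithLp.equiv 2 (Fin 3 → ℝ)).symm
      (crossProduct (WithLp.equiv 2 (Fin 3 → ℝ) p) (WithLp.equiv 2 (Fin 3 → ℝ) q))‖

lemma norm_sq_eq_sum (x : EuclideanSpace ℝ (Fin 3)) : ‖x‖ ^ 2 = ∑ i, x i ^ 2 := by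
  rw [EuclideanSpace.norm_eq, Real.sq_sqrt (by positivity)]
  simp [sq_abs]

lemma inner_eq_sum (p q : EuclideanSpace ℝ (Fin 3)) : ⟪p, q⟫ = ∑ i, p i * q i := by
  simp [PiLp.inner_apply, RCLike.inner_apply, mul_comm]

lemma crossNorm_sq (p q : EuclideanSpace ℝ (Fin 3)) :
    crossNorm p q ^ 2 = ‖p‖ ^ 2 * ‖q‖ ^ 2 - ⟪p, q⟫ ^ 2 := by
  unfold crossNorm
  rw [norm_sq_eq_sum, norm_sq_eq_sum p, norm_sq_eq_sum q, inner_eq_sum]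
  simp only [Fin.sum_univ_three, WithLp.equiv_symm_apply, PiLp.toLp_apply, cross_apply, WithLp.equiv_apply]
  simp only [Matrix.cons_val_zero, Matrix.cons_val_one, Matrix.head_cons, Matrix.cons_val_two,
    Matrix.tail_cons]
  ring

theorem l_sq_sub_j_sq (p q : EuclideanSpace ℝ (Fin 3)) (hg : 0 < relg p q) :
    ((en p + en q) / 2) ^ 2 - (crossNorm p q / relg p q) ^ 2
        = ((relg p q ^ 2 + 4) / (4 * relg p q ^ 2)) * ‖p - q‖ ^ 2 ∧
    1 + ‖p - q‖ ^ 2 / 4 ≤ ((en p + en q) / 2) ^ 2 - (crossNorm p q / relg p q) ^ 2 := by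
  have hargpos : 0 < 2 * (en p * en q - ⟪p, q⟫ - 1) := Real.sqrt_pos.mp hg
  have hg2 : relg p q ^ 2 = 2 * (en p * en q - ⟪p, q⟫ - 1) :=
    Real.sq_sqrt hargpos.le
  have hp2 : en p ^ 2 = 1 + ‖p‖ ^ 2 := Real.sq_sqrt (by positivity)
  have hq2 : en q ^ 2 = 1 + ‖q‖ ^ 2 := Real.sq_sqrt (by positivity)
  have hA : ‖p‖ ^ 2 = en p ^ 2 - 1 := by rw [hp2]; ring
  have hB : ‖q‖ ^ 2 = en q ^ 2 - 1 := by rw [hq2]; ring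
  have hN : ‖p - q‖ ^ 2 = en p ^ 2 - 1 + (en q ^ 2 - 1) - 2 * ⟪p, q⟫ := by
    rw [@norm_sub_sq_real, hA, hB]; ring
  have h2 : (2 : ℝ) * (en p * en q - ⟪p, q⟫ - 1) ≠ 0 := ne_of_gt hargpos
  have hmain : ((en p + en q) / 2) ^ 2 - (crossNorm p q / relg p q) ^ 2
      = ((relg p q ^ 2 + 4) / (4 * relg p q ^ 2)) * ‖p - q‖ ^ 2 := by
    rw [div_pow (crossNorm p q), crossNorm_sq, hA, hB, hN, hg2]
    set a := en p
    set b := en q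
    set c : ℝ := ⟪p, q⟫ with hc
    have h2' : a * b - c - 1 ≠ 0 := fun h => h2 (by rw [h]; ring)
    field_simp
    ring
  refine ⟨hmain, ?_⟩
  rw [hmain]
  have hg2pos : 0 < relg p q ^ 2 := by rw [hg2]; exact hargpos
  have hNg : relg p q ^ 2 ≤ ‖p - q‖ ^ 2 := by
    rw [hg2, hN]; nlinarith [sq_nonneg (en p - en q)]
  have key : ((relg p q ^ 2 + 4) / (4 * relg p q ^ 2)) * ‖p - q‖ ^ 2
      = ‖p - q‖ ^ 2 / 4 + ‖p - q‖ ^ 2 / relg p q ^ 2 := by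
    field_simp
  rw [key]
  have : (1 : ℝ) ≤ ‖p - q‖ ^ 2 / relg p q ^ 2 := (one_le_div hg2pos).mpr hNg
  linarith
end
end

section
/- Let γ > −2, c > 0, and 1 ≤ d < 2/max{−γ, 1}. Suppose the collision kernel satisfies 0 ≤ σ(g,θ) ≤ g^a sin^γ θ with 0 ≤ a ≤ 2 + γ, and let v_φ = g√s/(p₀q₀) with s = g²+4, g² = 2(p₀q₀ − p·q − 1). Then there is C > 0 such that for all p ∈ ℝ³, ∫_{ℝ³} ∫_{𝕊²} |v_φ σ(g,θ)|^d e^{−c q₀} dω dq ≤ C (1+|p|)^{ad/2}. -/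
open MeasureTheory
open scoped RealInnerProductSpace

noncomputable section

/-- Møller velocity `v_φ = g√s/(p₀q₀)` with `s = g² + 4`. -/
def moller (p q : EuclideanSpace ℝ (Fin 3)) : ℝ :=
  relg p q * Real.sqrt (relg p q ^ 2 + 4) / (en p * en q)

/-- Polar angle of `ω ∈ 𝕊²` relative to a fixed axis. -/
def polarAngle (ω : EuclideanSpace ℝ (Fin 3)) : ℝ :=
  Real.arccos ⟪(EuclideanSpace.single 0 1 : EuclideanSpace ℝ (Fin 3)), ω⟫


open MeasureTheory Measure Set Metric Real
open scoped ENNReal RealInnerProductSpace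


lemma one_le_en (p : EuclideanSpace ℝ (Fin 3)) : 1 ≤ en p :=
  (Real.le_sqrt zero_le_one (by positivity)).mpr (by nlinarith [sq_nonneg ‖p‖])

lemma en_pos (p : EuclideanSpace ℝ (Fin 3)) : 0 < en p := lt_of_lt_of_le one_pos (one_le_en p)

lemma norm_le_en (p : EuclideanSpace ℝ (Fin 3)) : ‖p‖ ≤ en p :=
  (Real.le_sqrt (norm_nonneg p) (by positivity)).mpr (by nlinarith)

lemma en_le (p : EuclideanSpace ℝ (Fin 3)) : en p ≤ 1 + ‖p‖ :=
  Real.sqrt_le_iff.mpr ⟨by positivity, by nlinarith [norm_nonneg p]⟩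

lemma half_le_en (p : EuclideanSpace ℝ (Fin 3)) : (1 + ‖p‖) / 2 ≤ en p :=
  (Real.le_sqrt (by positivity) (by positivity)).mpr
    (by nlinarith [sq_nonneg (‖p‖ - 1), norm_nonneg p])

lemma relg_nonneg (p q : EuclideanSpace ℝ (Fin 3)) : 0 ≤ relg p q := Real.sqrt_nonneg _

lemma relg_sq_le (p q : EuclideanSpace ℝ (Fin 3)) : relg p q ^ 2 ≤ 4 * (en p * en q) := by
  have hip : |⟪p, q⟫| ≤ ‖p‖ * ‖q‖ := abs_real_inner_le_norm p q
  have h1 : ‖p‖ ≤ en p := norm_le_en p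
  have h2 : ‖q‖ ≤ en q := norm_le_en q
  have hp := en_pos p; have hq := en_pos q
  rcases le_or_gt 0 (2 * (en p * en q - ⟪p, q⟫ - 1)) with h | h
  · rw [relg, Real.sq_sqrt h]
    have := abs_le.mp hip
    nlinarith [norm_nonneg p, norm_nonneg q]
  · rw [relg, Real.sqrt_eq_zero_of_nonpos h.le]
    nlinarith

lemma relg_le (p q : EuclideanSpace ℝ (Fin 3)) :
    relg p q ≤ 2 * Real.sqrt (en p * en q) := by
  have h := relg_sq_le p q
  have h0 := relg_nonneg p q
  have hu : (0:ℝ) ≤ en p * en q := by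
    have := (en_pos p).le; have := (en_pos q).le; positivity
  nlinarith [Real.sq_sqrt hu, Real.sqrt_nonneg (en p * en q),
    sq_nonneg (relg p q - 2 * Real.sqrt (en p * en q))]

lemma moller_nonneg (p q : EuclideanSpace ℝ (Fin 3)) : 0 ≤ moller p q := by
  rw [moller]
  have := relg_nonneg p q
  have := (en_pos p).le
  have := (en_pos q).le
  positivity

lemma moller_le_six (p q : EuclideanSpace ℝ (Fin 3)) : moller p q ≤ 6 := by
  have hu : 1 ≤ en p * en q := one_le_mul_of_one_le_of_one_le (one_le_en p) (one_le_en q)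
  have hg2 := relg_sq_le p q
  have hg0 := relg_nonneg p q
  have hs : Real.sqrt (relg p q ^ 2 + 4) ≤ Real.sqrt (8 * (en p * en q)) :=
    Real.sqrt_le_sqrt (by nlinarith)
  have hgle := relg_le p q
  have h8 : Real.sqrt (8 * (en p * en q)) ≤ 3 * Real.sqrt (en p * en q) := by
    have h9 : (8:ℝ) * (en p * en q) ≤ (3 * Real.sqrt (en p * en q))^2 := by
      have := Real.sq_sqrt (show (0:ℝ) ≤ en p * en q by positivity)
      nlinarith
    calc Real.sqrt (8 * (en p * en q)) ≤ Real.sqrt ((3 * Real.sqrt (en p * en q))^2) :=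
          Real.sqrt_le_sqrt h9
      _ = 3 * Real.sqrt (en p * en q) := Real.sqrt_sq (by positivity)
  have hsq : Real.sqrt (en p * en q) * Real.sqrt (en p * en q) = en p * en q :=
    Real.mul_self_sqrt (by positivity)
  rw [moller, div_le_iff₀ (by positivity : (0:ℝ) < en p * en q)]
  calc relg p q * Real.sqrt (relg p q ^ 2 + 4)
      ≤ (2 * Real.sqrt (en p * en q)) * (3 * Real.sqrt (en p * en q)) := by
        apply mul_le_mul hgle (hs.trans h8) (Real.sqrt_nonneg _) (by positivity)
    _ = 6 * (en p * en q) := by rw [show (2 * Real.sqrt (en p * en q)) * (3 * Real.sqrt (en p * en q)) = 6 * (Real.sqrt (en p * en q) * Real.sqrt (en p * en q)) by ring, hsq]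
    _ ≤ 6 * (en p * en q) := le_refl _

lemma continuous_en : Continuous en := by
  unfold en; fun_prop

lemma outer_integrable {e cc : ℝ} (he : 0 ≤ e) (hc : 0 < cc) :
    Integrable (fun q : EuclideanSpace ℝ (Fin 3) =>
      en q ^ e * Real.exp (-cc * en q)) := by
  set n : ℕ := ⌈e⌉₊ + 4 with hn
  have hn0 : (0:ℝ) < n := by positivity
  set M : ℝ := (2 * n / cc) ^ n with hM
  have hcont : Continuous (fun q : EuclideanSpace ℝ (Fin 3) =>
      en q ^ e * Real.exp (-cc * en q)) := by
    apply Continuous.mul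
    · exact continuous_en.rpow_const (fun x => Or.inl (en_pos x).ne')
    · exact Real.continuous_exp.comp (continuous_const.mul continuous_en)
  have hint : Integrable (fun q : EuclideanSpace ℝ (Fin 3) =>
      M * (1 + ‖q‖) ^ (-(4:ℝ))) := by
    refine (integrable_one_add_norm ?_).const_mul M
    rw [finrank_euclideanSpace]; norm_num
  refine hint.mono' hcont.aestronglyMeasurable (Filter.Eventually.of_forall fun q => ?_)
  set s : ℝ := 1 + ‖q‖ with hs
  have hs1 : 1 ≤ s := by have := norm_nonneg q; rw [hs]; linarith
  have hs0 : 0 < s := lt_of_lt_of_le one_pos hs1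
  have hfq : 0 ≤ en q ^ e * Real.exp (-cc * en q) := by
    have := (en_pos q).le; positivity
  rw [Real.norm_of_nonneg hfq]
  -- key bound
  have key : en q ^ e * Real.exp (-cc * en q) * s ^ (4:ℝ) ≤ M := by
    have h1 : en q ^ e ≤ s ^ e := Real.rpow_le_rpow (en_pos q).le (en_le q) he
    have h2 : Real.exp (-cc * en q) ≤ Real.exp (-(cc * s / 2)) := by
      apply Real.exp_le_exp.mpr
      have := half_le_en q
      nlinarith
    have h3 : s ^ e * s ^ (4:ℝ) = s ^ (e + 4) := (Real.rpow_add hs0 e 4).symm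
    have h4 : s ^ (e + 4) ≤ s ^ (n:ℝ) := by
      apply Real.rpow_le_rpow_of_exponent_le hs1
      have := Nat.le_ceil e
      push_cast [hn]
      linarith
    have h5 : s ^ (n:ℝ) = s ^ n := Real.rpow_natCast s n
    have h6 : s ^ n ≤ M * Real.exp (cc * s / 2) := by
      have hx : cc * s / (2 * n) ≤ Real.exp (cc * s / (2 * n)) :=
        le_trans (by linarith) (Real.add_one_le_exp _)
      have hx0 : 0 ≤ cc * s / (2 * n) := by positivity
      have h7 : (cc * s / (2 * n)) ^ n ≤ Real.exp (cc * s / (2 * n)) ^ n :=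
        pow_le_pow_left₀ hx0 hx n
      rw [← Real.exp_nat_mul] at h7
      have h8 : (n:ℝ) * (cc * s / (2 * n)) = cc * s / 2 := by
        field_simp
      rw [h8] at h7
      have h9 : (cc * s / (2 * n)) ^ n = (cc / (2 * n)) ^ n * s ^ n := by
        rw [← mul_pow]; ring_nf
      rw [h9] at h7
      have h10 : (0:ℝ) < (cc / (2*n))^n := by positivity
      rw [hM]
      have h11 : (2 * (n:ℝ) / cc) ^ n = ((cc / (2*n))^n)⁻¹ := by
        rw [← inv_pow]; congr 1; field_simp
      rw [h11]
      calc s ^ n = ((cc / (2*n))^n)⁻¹ * ((cc / (2*n))^n * s ^ n) := by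
            field_simp
        _ ≤ ((cc / (2*n))^n)⁻¹ * Real.exp (cc * s / 2) :=
            mul_le_mul_of_nonneg_left h7 (inv_nonneg.mpr h10.le)

    calc en q ^ e * Real.exp (-cc * en q) * s ^ (4:ℝ)
        ≤ s ^ e * Real.exp (-(cc * s / 2)) * s ^ (4:ℝ) := by
          apply mul_le_mul_of_nonneg_right _ (by positivity)
          exact mul_le_mul h1 h2 (Real.exp_nonneg _) (by positivity)
      _ = s ^ (e+4) * Real.exp (-(cc * s / 2)) := by rw [← h3]; ring
      _ ≤ s ^ n * Real.exp (-(cc * s / 2)) := by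
          apply mul_le_mul_of_nonneg_right _ (Real.exp_nonneg _)
          rw [← h5]; exact h4
      _ ≤ (M * Real.exp (cc * s / 2)) * Real.exp (-(cc * s / 2)) := by
          apply mul_le_mul_of_nonneg_right h6 (Real.exp_nonneg _)
      _ = M := by rw [mul_assoc, ← Real.exp_add]; simp
  have hs4 : (0:ℝ) < s ^ (4:ℝ) := Real.rpow_pos_of_pos hs0 4
  rw [Real.rpow_neg hs0.le]
  rw [← div_eq_mul_inv, le_div_iff₀ hs4]
  exact key

lemma L1 {b : ℝ} (hb : -1 < b) :
    ∫⁻ r in Set.Ioc (0:ℝ) 1, ENNReal.ofReal (r ^ b) < ⊤ := by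
  have h : IntegrableOn (fun r : ℝ => r ^ b) (Set.Ioc 0 1) volume := by
    have h2 := intervalIntegral.intervalIntegrable_rpow' (a := 0) (b := 1) hb
    rwa [intervalIntegrable_iff, Set.uIoc_of_le (zero_le_one)] at h2
  exact h.lintegral_lt_top

lemma L2 {b : ℝ} (hb : -2 < b) :
    ∫⁻ z : EuclideanSpace ℝ (Fin 2),
      (if ‖z‖ ≤ 1 then ENNReal.ofReal (‖z‖ ^ b) else 0) < ⊤ := by
  set E := EuclideanSpace ℝ (Fin 2)
  set F : ℝ → ℝ≥0∞ := fun t => if t ≤ 1 then ENNReal.ofReal (t ^ b) else 0 with hFdef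
  have hF : Measurable F := by
    apply Measurable.ite (measurableSet_Iic) _ measurable_const
    measurability
  have hdim : Module.finrank ℝ E = 2 := by simp [E, finrank_euclideanSpace]
  have hmp := Measure.measurePreserving_homeomorphUnitSphereProd (volume : Measure E)
  rw [hdim] at hmp
  have e1 : ∫⁻ x : ({(0:E)}ᶜ : Set E), F ‖x.1‖ ∂(Measure.comap Subtype.val volume)
      = ∫⁻ z : E, F ‖z‖ := by
    rw [lintegral_subtype_comap (measurableSet_singleton (0:E)).compl (fun z => F ‖z‖)]
    rw [MeasureTheory.restrict_compl_singleton]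
  have e2 := hmp.lintegral_comp (f := fun y : (Metric.sphere (0:E) 1 × Set.Ioi (0:ℝ)) => F y.2.1)
    (hF.comp (measurable_subtype_coe.comp measurable_snd))
  simp only [homeomorphUnitSphereProd_apply_snd_coe] at e2
  rw [← e1, e2]
  -- now product
  have heq : (fun y : (Metric.sphere (0:E) 1 × Set.Ioi (0:ℝ)) => F y.2.1)
      = fun y => (fun _ : Metric.sphere (0:E) 1 => (1:ℝ≥0∞)) y.1
          * (fun r : Set.Ioi (0:ℝ) => F r.1) y.2 := by
    funext y; rw [one_mul]
  rw [heq, lintegral_prod_mul measurable_const.aemeasurable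
    ((show Measurable fun r : Set.Ioi (0:ℝ) => F r.1 from
      hF.comp measurable_subtype_coe).aemeasurable)]
  apply ENNReal.mul_lt_top
  · rw [lintegral_one]; exact measure_lt_top _ _
  · rw [Measure.volumeIoiPow,
      lintegral_withDensity_eq_lintegral_mul _
        (show Measurable fun r : Set.Ioi (0:ℝ) => ENNReal.ofReal (r.1 ^ 1) from
          ENNReal.measurable_ofReal.comp (measurable_subtype_coe.pow_const 1))
        (g := fun r : Set.Ioi (0:ℝ) => F r.1) (hF.comp measurable_subtype_coe)]
    have e3 : ∫⁻ r : Set.Ioi (0:ℝ),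
          ((fun r : Set.Ioi (0:ℝ) => ENNReal.ofReal (r.1 ^ 1))
            * fun r : Set.Ioi (0:ℝ) => F r.1) r ∂(Measure.comap Subtype.val volume)
        = ∫⁻ r in Set.Ioi (0:ℝ), ENNReal.ofReal (r ^ 1) * F r ∂volume :=
      lintegral_subtype_comap measurableSet_Ioi (fun r : ℝ => ENNReal.ofReal (r ^ 1) * F r)
    rw [e3]
    have hle : ∀ r ∈ Set.Ioi (0:ℝ), ENNReal.ofReal (r ^ 1) * F r
        ≤ (Set.Ioc (0:ℝ) 1).indicator (fun r => ENNReal.ofReal (r ^ (b+1))) r := by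
      intro r hr
      simp only [Set.mem_Ioi] at hr
      by_cases h1 : r ≤ 1
      · rw [Set.indicator_of_mem (by exact ⟨hr, h1⟩), hFdef]
        simp only [if_pos h1, pow_one]
        rw [← ENNReal.ofReal_mul hr.le]
        apply le_of_eq; congr 1
        rw [Real.rpow_add hr, Real.rpow_one]; ring
      · rw [hFdef]; simp only [if_neg h1, mul_zero]
        exact zero_le
    calc ∫⁻ r in Set.Ioi (0:ℝ), ENNReal.ofReal (r ^ 1) * F r ∂volume
        ≤ ∫⁻ r in Set.Ioi (0:ℝ),
            (Set.Ioc (0:ℝ) 1).indicator (fun r => ENNReal.ofReal (r ^ (b+1))) r ∂volume :=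
          setLIntegral_mono' measurableSet_Ioi hle
      _ ≤ ∫⁻ r, (Set.Ioc (0:ℝ) 1).indicator (fun r => ENNReal.ofReal (r ^ (b+1))) r ∂volume :=
          setLIntegral_le_lintegral _ _
      _ = ∫⁻ r in Set.Ioc (0:ℝ) 1, ENNReal.ofReal (r ^ (b+1)) ∂volume := by
          rw [lintegral_indicator]; exact measurableSet_Ioc
      _ < ⊤ := L1 (by linarith)

lemma norm_sq_eq3 (x : EuclideanSpace ℝ (Fin 3)) :
    ‖x‖ ^ 2 = (x 0)^2 + (x 1)^2 + (x 2)^2 := by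
  rw [EuclideanSpace.norm_eq, Real.sq_sqrt (by positivity)]
  simp [Fin.sum_univ_three, sq_abs]

lemma norm_sq_eq2 (x : EuclideanSpace ℝ (Fin 2)) :
    ‖x‖ ^ 2 = (x 0)^2 + (x 1)^2 := by
  rw [EuclideanSpace.norm_eq, Real.sq_sqrt (by positivity)]
  simp [Fin.sum_univ_two, sq_abs]

lemma L3 {b : ℝ} (h1 : -1 < b) (h2 : b ≤ 0) :
    ∫⁻ x : EuclideanSpace ℝ (Fin 3),
      (if ‖x‖ < 1 then (1:ℝ≥0∞) else 0)
        * ENNReal.ofReal (((x 1)^2 + (x 2)^2) ^ b) < ⊤ := by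
  set g₁ : ℝ → ℝ≥0∞ := fun t => if |t| ≤ 1 then 1 else 0 with hg₁
  set g₂ : (Fin 2 → ℝ) → ℝ≥0∞ := fun z =>
    if (z 0)^2 + (z 1)^2 ≤ 1 then ENNReal.ofReal (((z 0)^2 + (z 1)^2) ^ b) else 0 with hg₂
  have hg₁m : Measurable g₁ := by
    apply Measurable.ite _ measurable_const measurable_const
    exact measurableSet_le (measurable_id.abs) measurable_const
  have hsum : Measurable fun z : Fin 2 → ℝ => (z 0)^2 + (z 1)^2 :=
    ((measurable_pi_apply 0).pow_const 2).add ((measurable_pi_apply 1).pow_const 2)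
  have hg₂m : Measurable g₂ :=
    Measurable.ite (measurableSet_le hsum measurable_const)
      (ENNReal.measurable_ofReal.comp (hsum.pow_const b)) measurable_const
  -- pointwise bound
  have hpt : ∀ x : EuclideanSpace ℝ (Fin 3),
      (if ‖x‖ < 1 then (1:ℝ≥0∞) else 0) * ENNReal.ofReal (((x 1)^2 + (x 2)^2) ^ b)
      ≤ g₁ (x 0) * g₂ (fun j => x (Fin.succ j)) := by
    intro x
    by_cases hx : ‖x‖ < 1
    · have hn := norm_sq_eq3 x
      have hx2 : ‖x‖^2 ≤ 1 := by nlinarith [norm_nonneg x]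
      have h0 : |x 0| ≤ 1 := by
        rw [← sq_le_one_iff_abs_le_one]; nlinarith [sq_nonneg (x 1), sq_nonneg (x 2)]
      have h12 : (x 1)^2 + (x 2)^2 ≤ 1 := by nlinarith [sq_nonneg (x 0)]
      rw [if_pos hx, hg₁, hg₂]
      simp only []
      rw [if_pos h0, if_pos (by show ((fun j => x (Fin.succ j)) 0)^2 + _ ≤ 1; exact h12)]
      simp
    · rw [if_neg hx, zero_mul]; exact zero_le
  have step1 : ∫⁻ x : EuclideanSpace ℝ (Fin 3),
      (if ‖x‖ < 1 then (1:ℝ≥0∞) else 0) * ENNReal.ofReal (((x 1)^2 + (x 2)^2) ^ b)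
      ≤ ∫⁻ x : EuclideanSpace ℝ (Fin 3), g₁ (x 0) * g₂ (fun j => x (Fin.succ j)) :=
    lintegral_mono hpt
  refine lt_of_le_of_lt step1 ?_
  -- transfer to pi space
  have e1 : ∫⁻ x : EuclideanSpace ℝ (Fin 3), g₁ (x 0) * g₂ (fun j => x (Fin.succ j))
      = ∫⁻ y : (Fin 3 → ℝ), g₁ (y 0) * g₂ (fun j => y (Fin.succ j)) := by
    exact (EuclideanSpace.volume_preserving_symm_measurableEquiv_toLp (Fin 3)).lintegral_comp
      (f := fun y : Fin 3 → ℝ => g₁ (y 0) * g₂ (fun j => y (Fin.succ j)))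
      ((hg₁m.comp' (measurable_pi_apply 0)).mul
        (hg₂m.comp' (measurable_pi_lambda (fun y : Fin 3 → ℝ => fun j : Fin 2 => y (Fin.succ j)) fun j => measurable_pi_apply _)))
  rw [e1]
  -- split first coordinate
  have mp2 := measurePreserving_piFinSuccAbove (fun _ : Fin 3 => (volume : Measure ℝ)) 0
  have e2 : ∫⁻ y : (Fin 3 → ℝ), g₁ (y 0) * g₂ (fun j => y (Fin.succ j))
      = ∫⁻ z : ℝ × (Fin 2 → ℝ), g₁ z.1 * g₂ z.2 := by
    have h := mp2.lintegral_comp (f := fun z : ℝ × (Fin 2 → ℝ) => g₁ z.1 * g₂ z.2)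
      ((hg₁m.comp measurable_fst).mul (hg₂m.comp measurable_snd))
    have e2' : ∫⁻ y : Fin 3 → ℝ, g₁ (y 0) * g₂ (fun j => y (Fin.succ j))
        = ∫⁻ y : Fin 3 → ℝ, (fun z : ℝ × (Fin 2 → ℝ) => g₁ z.1 * g₂ z.2)
            ((MeasurableEquiv.piFinSuccAbove (fun _ : Fin 3 => ℝ) 0) y) := by
      apply lintegral_congr
      intro y
      simp [MeasurableEquiv.piFinSuccAbove, Fin.insertNthEquiv, Fin.removeNth,
        Fin.zero_succAbove]
      rfl
    exact e2'.trans (by exact h)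
  rw [e2, volume_eq_prod]
  rw [lintegral_prod_mul (hg₁m.aemeasurable) (hg₂m.aemeasurable)]
  apply ENNReal.mul_lt_top
  · have : g₁ = (Set.Icc (-1:ℝ) 1).indicator 1 := by
      funext t; simp [hg₁, Set.indicator, abs_le, Set.mem_Icc]
    rw [this, lintegral_indicator_one measurableSet_Icc, Real.volume_Icc]
    exact ENNReal.ofReal_lt_top
  · -- transfer to Euclidean 2
    have e3 : ∫⁻ z : (Fin 2 → ℝ), g₂ z
        = ∫⁻ w : EuclideanSpace ℝ (Fin 2),
            (if ‖w‖ ≤ 1 then ENNReal.ofReal (‖w‖ ^ (2*b)) else 0) := by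
      have hmeas : Measurable (fun w : EuclideanSpace ℝ (Fin 2) =>
          if ‖w‖ ≤ 1 then ENNReal.ofReal (‖w‖ ^ (2*b)) else 0) :=
        Measurable.ite (measurableSet_le measurable_norm measurable_const)
          (ENNReal.measurable_ofReal.comp (measurable_norm.pow_const (2*b))) measurable_const
      have := (MeasurePreserving.symm (MeasurableEquiv.toLp 2 (Fin 2 → ℝ)).symm
        (EuclideanSpace.volume_preserving_symm_measurableEquiv_toLp (Fin 2))).lintegral_comp
        (f := fun w : EuclideanSpace ℝ (Fin 2) =>
          if ‖w‖ ≤ 1 then ENNReal.ofReal (‖w‖ ^ (2*b)) else 0) hmeas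
      rw [← this]
      apply lintegral_congr
      intro z
      set w : EuclideanSpace ℝ (Fin 2) := (MeasurableEquiv.toLp 2 (Fin 2 → ℝ)).symm.symm z with hw
      have hwz : ∀ i, w i = z i := fun i => rfl
      have hn2 : ‖w‖^2 = (z 0)^2 + (z 1)^2 := by rw [norm_sq_eq2, hwz 0, hwz 1]
      have hcond : ((z 0)^2 + (z 1)^2 ≤ 1) ↔ (‖w‖ ≤ 1) := by
        rw [← hn2]
        constructor
        · intro h; nlinarith [norm_nonneg w]
        · intro h; nlinarith [norm_nonneg w]
      have hval : ((z 0)^2 + (z 1)^2 : ℝ) ^ b = ‖w‖ ^ (2*b) := by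
        rw [← hn2, ← Real.rpow_natCast ‖w‖ 2, ← Real.rpow_mul (norm_nonneg w)]
        norm_num
      rw [hg₂]
      simp only []
      by_cases h : (z 0)^2 + (z 1)^2 ≤ 1
      · rw [if_pos h, if_pos (hcond.mp h), hval]
      · rw [if_neg h, if_neg (fun hc => h (hcond.mpr hc))]
    rw [e3]
    exact L2 (by linarith)

lemma measurable_polarAngle : Measurable polarAngle := by
  apply Measurable.comp Real.continuous_arccos.measurable
  exact (Continuous.inner continuous_const continuous_id).measurable

lemma sphere_lint {β : ℝ} (hβ : -2 < β) :
    ∫⁻ ω : Metric.sphere (0:EuclideanSpace ℝ (Fin 3)) 1,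
      ENNReal.ofReal (Real.sin (polarAngle (ω : EuclideanSpace ℝ (Fin 3))) ^ β)
      ∂(volume : Measure (EuclideanSpace ℝ (Fin 3))).toSphere < ⊤ := by
  set E := EuclideanSpace ℝ (Fin 3)
  set b : ℝ := min (β/2) 0 with hbdef
  have hb1 : -1 < b := by
    rcases le_or_gt (β/2) 0 with h | h
    · rw [hbdef, min_eq_left h]; linarith
    · rw [hbdef, min_eq_right h.le]; norm_num
  have hb2 : b ≤ 0 := min_le_right _ _
  have hble : b ≤ β/2 := min_le_left _ _
  set h : Metric.sphere (0:E) 1 → ℝ≥0∞ :=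
    fun ω => ENNReal.ofReal (Real.sin (polarAngle ω.1) ^ β) with hhdef
  have hhm : Measurable h := by
    apply ENNReal.measurable_ofReal.comp
    exact (Real.measurable_sin.comp
      (measurable_polarAngle.comp measurable_subtype_coe)).pow_const β
  set g : (Set.Ioi (0:ℝ)) → ℝ≥0∞ := fun r => if r.1 < 1 then 1 else 0 with hgdef
  have hgm : Measurable g := by
    apply Measurable.ite _ measurable_const measurable_const
    exact measurable_subtype_coe measurableSet_Iio
  have hmp := Measure.measurePreserving_homeomorphUnitSphereProd (volume : Measure E)
  have hdim : Module.finrank ℝ E - 1 = 2 := by simp [E, finrank_euclideanSpace]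
  rw [hdim] at hmp
  -- value of ∫⁻ g dν
  have hgint : ∫⁻ r, g r ∂(Measure.volumeIoiPow 2) = ENNReal.ofReal (1/3) := by
    have : g = Set.indicator (Set.Iio (⟨1, by norm_num⟩ : Set.Ioi (0:ℝ))) 1 := by
      funext r
      by_cases hr : r.1 < 1
      · rw [hgdef]; simp only [if_pos hr]
        rw [Set.indicator_of_mem]
        · rfl
        · exact hr
      · rw [hgdef]; simp only [if_neg hr]
        rw [Set.indicator_of_notMem]
        intro hc
        exact hr hc
    rw [this, lintegral_indicator_one measurableSet_Iio,
      Measure.volumeIoiPow_apply_Iio]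
    norm_num
  -- product integral
  have hprodint : ∫⁻ y : (Metric.sphere (0:E) 1 × Set.Ioi (0:ℝ)),
        h y.1 * g y.2 ∂((volume : Measure E).toSphere.prod (Measure.volumeIoiPow 2))
      = (∫⁻ ω, h ω ∂(volume : Measure E).toSphere) * ENNReal.ofReal (1/3) := by
    rw [lintegral_prod_mul hhm.aemeasurable hgm.aemeasurable, hgint]
  -- transfer to E
  set Φ : E → ℝ≥0∞ := fun v =>
    ENNReal.ofReal (Real.sin (polarAngle (‖v‖⁻¹ • v)) ^ β) * (if ‖v‖ < 1 then 1 else 0)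
    with hΦdef
  have hcomp := hmp.lintegral_comp
    (f := fun y : (Metric.sphere (0:E) 1 × Set.Ioi (0:ℝ)) => h y.1 * g y.2)
    ((hhm.comp' measurable_fst).mul (hgm.comp' measurable_snd))
  have hpteq : ∀ x : ({(0:E)}ᶜ : Set E),
      h ((homeomorphUnitSphereProd E) x).1 * g ((homeomorphUnitSphereProd E) x).2
      = Φ x.1 := by
    intro x
    have h2 : (((homeomorphUnitSphereProd E) x).2 : ℝ) = ‖(x:E)‖ := by simp [homeomorphUnitSphereProd_apply_snd_coe]
    rw [hhdef, hgdef, hΦdef]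
    simp only [homeomorphUnitSphereProd_apply_fst_coe, h2]
  have hsub : ∫⁻ x : ({(0:E)}ᶜ : Set E), Φ x.1 ∂(Measure.comap Subtype.val volume)
      = ∫⁻ v in {(0:E)}ᶜ, Φ v ∂volume :=
    lintegral_subtype_comap (measurableSet_singleton (0:E)).compl Φ
  have key : (∫⁻ ω, h ω ∂(volume : Measure E).toSphere) * ENNReal.ofReal (1/3)
      = ∫⁻ v in {(0:E)}ᶜ, Φ v ∂volume := by
    rw [← hprodint, ← hcomp, ← hsub]
    exact lintegral_congr hpteq
  -- bound the RHS
  have hbound : ∫⁻ v in {(0:E)}ᶜ, Φ v ∂volume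
      ≤ ∫⁻ v : E, (if ‖v‖ < 1 then (1:ℝ≥0∞) else 0)
          * ENNReal.ofReal (((v 1)^2 + (v 2)^2) ^ b) := by
    refine le_trans (setLIntegral_mono' (measurableSet_singleton (0:E)).compl ?_)
      (setLIntegral_le_lintegral _ _)
    intro v hv
    have hv0 : v ≠ 0 := hv
    have hvn : 0 < ‖v‖ := norm_pos_iff.mpr hv0
    by_cases hlt : ‖v‖ < 1
    · rw [hΦdef]
      simp only [if_pos hlt, mul_one, one_mul]
      apply ENNReal.ofReal_le_ofReal
      -- main pointwise estimate
      set u : E := ‖v‖⁻¹ • v with hudef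
      set r : ℝ := (v 1)^2 + (v 2)^2 with hrdef
      have hr0 : 0 ≤ r := by positivity
      have hu0 : u 0 = ‖v‖⁻¹ * v 0 := rfl
      have hip : ⟪(EuclideanSpace.single 0 1 : E), u⟫ = u 0 := by
        rw [EuclideanSpace.inner_single_left]
        simp
      have hsin : Real.sin (polarAngle u) = Real.sqrt (1 - (u 0)^2) := by
        rw [polarAngle, hip, Real.sin_arccos]
      have hnsq := norm_sq_eq3 v
      have hratio : 1 - (u 0)^2 = r / ‖v‖^2 := by
        rw [hu0]
        field_simp
        nlinarith [hnsq]
      set ρ : ℝ := r / ‖v‖^2 with hρdef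
      have hρ0 : 0 ≤ ρ := by positivity
      have hρ1 : ρ ≤ 1 := by
        rw [hρdef, div_le_one (by positivity)]
        nlinarith [sq_nonneg (v 0)]
      have hstep1 : Real.sin (polarAngle u) ^ β = ρ ^ (β/2) := by
        rw [hsin, hratio, Real.sqrt_eq_rpow, ← Real.rpow_mul hρ0]
        congr 1; ring
      rw [hstep1]
      have hstep2 : ρ ^ (β/2) ≤ ρ ^ b := by
        rcases eq_or_lt_of_le hρ0 with hz | hpos
        · rw [← hz]
          by_cases hβ2 : (β/2) = 0
          · have hb0 : b = 0 := by rw [hbdef, hβ2]; simp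
            rw [hβ2, hb0]
          · rw [Real.zero_rpow hβ2]
            exact Real.rpow_nonneg le_rfl b
        · exact Real.rpow_le_rpow_of_exponent_ge hpos hρ1 hble
      refine hstep2.trans ?_
      have hstep3 : ρ ^ b = r ^ b / (‖v‖^2) ^ b := Real.div_rpow hr0 (sq_nonneg ‖v‖) b
      rw [hstep3]
      apply div_le_self (Real.rpow_nonneg hr0 b)
      apply Real.one_le_rpow_of_pos_of_le_one_of_nonpos (by positivity)
      · nlinarith
      · exact hb2
    · rw [hΦdef]
      simp only [if_neg hlt, mul_zero]
      exact zero_le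
  -- conclude
  have hfin : (∫⁻ ω, h ω ∂(volume : Measure E).toSphere) * ENNReal.ofReal (1/3) < ⊤ := by
    rw [key]
    exact lt_of_le_of_lt hbound (L3 hb1 hb2)
  have := ENNReal.lt_top_of_mul_ne_top_left hfin.ne
    (by simp : (ENNReal.ofReal (1/3) : ℝ≥0∞) ≠ 0)
  exact this

theorem collision_frequency_bound (γ a c d : ℝ) (σ : ℝ → ℝ → ℝ)
    (hγ : -2 < γ) (hc : 0 < c) (hd1 : 1 ≤ d) (hd2 : d < 2 / max (-γ) 1)
    (ha0 : 0 ≤ a) (ha1 : a ≤ 2 + γ)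
    (hσ : ∀ g θ, 0 ≤ g → θ ∈ Set.Icc 0 Real.pi →
      0 ≤ σ g θ ∧ σ g θ ≤ g ^ a * Real.sin θ ^ γ) :
    ∃ C > 0, ∀ p : EuclideanSpace ℝ (Fin 3),
      (∫ q : EuclideanSpace ℝ (Fin 3),
        ∫ ω : Metric.sphere (0 : EuclideanSpace ℝ (Fin 3)) 1,
          |moller p q * σ (relg p q) (polarAngle (ω : EuclideanSpace ℝ (Fin 3)))| ^ d
              * Real.exp (-c * en q)
            ∂(volume : Measure (EuclideanSpace ℝ (Fin 3))).toSphere)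
        ≤ C * (1 + ‖p‖) ^ (a * d / 2) := by
  have hd0 : (0:ℝ) < d := lt_of_lt_of_le one_pos hd1
  have hβ : -2 < γ * d := by
    have hm : (0:ℝ) < max (-γ) 1 := lt_of_lt_of_le one_pos (le_max_right _ _)
    have h2 : d * max (-γ) 1 < 2 := (lt_div_iff₀ hm).mp hd2
    have h3 : -γ ≤ max (-γ) 1 := le_max_left _ _
    nlinarith
  set e : ℝ := a * d / 2 with hedef
  have he0 : 0 ≤ e := by positivity
  set Sphere := Metric.sphere (0 : EuclideanSpace ℝ (Fin 3)) 1
  set μS := (volume : Measure (EuclideanSpace ℝ (Fin 3))).toSphere with hμS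
  set h₀ : Sphere → ℝ :=
    fun ω => Real.sin (polarAngle (ω : EuclideanSpace ℝ (Fin 3))) ^ (γ * d) with hh₀
  have hs_nonneg : ∀ ω : Sphere, 0 ≤ h₀ ω := by
    intro ω
    apply Real.rpow_nonneg
    exact Real.sin_nonneg_of_nonneg_of_le_pi (Real.arccos_nonneg _) (Real.arccos_le_pi _)
  have hsm : Measurable h₀ :=
    (Real.measurable_sin.comp (measurable_polarAngle.comp measurable_subtype_coe)).pow_const _
  have hSfin := sphere_lint hβ
  set J : ℝ := (∫⁻ ω : Sphere, ENNReal.ofReal (h₀ ω) ∂μS).toReal with hJ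
  have hJ0 : 0 ≤ J := ENNReal.toReal_nonneg
  have h₀int : Integrable h₀ μS := by
    constructor
    · exact hsm.aestronglyMeasurable
    · rw [hasFiniteIntegral_iff_ofReal (Filter.Eventually.of_forall hs_nonneg)]
      exact hSfin
  have h₀val : ∫ ω, h₀ ω ∂μS = J := by
    rw [integral_eq_lintegral_of_nonneg_ae (Filter.Eventually.of_forall hs_nonneg)
      hsm.aestronglyMeasurable]
  set K : ℝ := (6 * 2 ^ a) ^ d with hK
  have hK0 : (0:ℝ) < K := by positivity
  set I : ℝ := ∫ q : EuclideanSpace ℝ (Fin 3), en q ^ e * Real.exp (-c * en q) with hI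
  have hIint := outer_integrable he0 hc
  have hI0 : 0 ≤ I :=
    integral_nonneg fun q => mul_nonneg (Real.rpow_nonneg (en_pos q).le _) (Real.exp_nonneg _)
  refine ⟨K * J * I + 1, by positivity, fun p => ?_⟩
  set G : EuclideanSpace ℝ (Fin 3) → ℝ :=
    fun q => (K * J * en p ^ e) * (en q ^ e * Real.exp (-c * en q)) with hG
  have hGint : Integrable G := hIint.const_mul _
  have hinner_nonneg : ∀ q, 0 ≤ ∫ ω : Sphere,
      |moller p q * σ (relg p q) (polarAngle (ω : EuclideanSpace ℝ (Fin 3)))| ^ d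
        * Real.exp (-c * en q) ∂μS := by
    intro q
    apply integral_nonneg
    intro ω
    exact mul_nonneg (Real.rpow_nonneg (abs_nonneg _) d) (Real.exp_nonneg _)
  have houter : ∀ q, (∫ ω : Sphere,
      |moller p q * σ (relg p q) (polarAngle (ω : EuclideanSpace ℝ (Fin 3)))| ^ d
        * Real.exp (-c * en q) ∂μS) ≤ G q := by
    intro q
    set u : ℝ := en p * en q with hu
    have hu0 : (0:ℝ) < u := mul_pos (en_pos p) (en_pos q)
    set cst : ℝ := K * en p ^ e * en q ^ e * Real.exp (-c * en q) with hcst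
    have hcst0 : 0 ≤ cst :=
      mul_nonneg (mul_nonneg (mul_nonneg hK0.le (Real.rpow_nonneg (en_pos p).le _))
        (Real.rpow_nonneg (en_pos q).le _)) (Real.exp_nonneg _)
    set D : Sphere → ℝ := fun ω => cst * h₀ ω with hD
    have hDint : Integrable D μS := h₀int.const_mul _
    have hpt : ∀ ω : Sphere,
        |moller p q * σ (relg p q) (polarAngle (ω : EuclideanSpace ℝ (Fin 3)))| ^ d
          * Real.exp (-c * en q) ≤ D ω := by
      intro ω
      set θ : ℝ := polarAngle (ω : EuclideanSpace ℝ (Fin 3)) with hθ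
      have hθmem : θ ∈ Set.Icc 0 Real.pi := ⟨Real.arccos_nonneg _, Real.arccos_le_pi _⟩
      obtain ⟨hσ0, hσle⟩ := hσ (relg p q) θ (relg_nonneg p q) hθmem
      have hsθ : 0 ≤ Real.sin θ := Real.sin_nonneg_of_nonneg_of_le_pi hθmem.1 hθmem.2
      have hsγ : 0 ≤ Real.sin θ ^ γ := Real.rpow_nonneg hsθ γ
      have hm0 := moller_nonneg p q
      have hm6 := moller_le_six p q
      -- relg ^ a ≤ 2 ^ a * u ^ (a/2)
      have hga : relg p q ^ a ≤ 2 ^ a * u ^ (a/2) := by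
        have h1 : relg p q ^ a ≤ (2 * Real.sqrt u) ^ a :=
          Real.rpow_le_rpow (relg_nonneg p q) (relg_le p q) ha0
        have h2 : (2 * Real.sqrt u) ^ a = 2 ^ a * (Real.sqrt u) ^ a :=
          Real.mul_rpow (by norm_num) (Real.sqrt_nonneg u)
        have h3 : (Real.sqrt u) ^ a = u ^ (a/2) := by
          rw [Real.sqrt_eq_rpow, ← Real.rpow_mul hu0.le]
          congr 1; ring
        rw [h2, h3] at h1
        exact h1
      have hσle2 : σ (relg p q) θ ≤ (2 ^ a * u ^ (a/2)) * Real.sin θ ^ γ :=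
        le_trans hσle (mul_le_mul_of_nonneg_right hga hsγ)
      have hprod : moller p q * σ (relg p q) θ
          ≤ (6 * 2 ^ a * u ^ (a/2)) * Real.sin θ ^ γ := by
        have := mul_le_mul hm6 hσle2 hσ0 (by norm_num : (0:ℝ) ≤ 6)
        calc moller p q * σ (relg p q) θ ≤ 6 * ((2 ^ a * u ^ (a/2)) * Real.sin θ ^ γ) := this
          _ = (6 * 2 ^ a * u ^ (a/2)) * Real.sin θ ^ γ := by ring
      have habs : |moller p q * σ (relg p q) θ| = moller p q * σ (relg p q) θ :=
        abs_of_nonneg (mul_nonneg hm0 hσ0)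
      have hrpow : |moller p q * σ (relg p q) θ| ^ d
          ≤ ((6 * 2 ^ a * u ^ (a/2)) * Real.sin θ ^ γ) ^ d := by
        rw [habs]
        exact Real.rpow_le_rpow (mul_nonneg hm0 hσ0) hprod hd0.le
      have hexpand : ((6 * 2 ^ a * u ^ (a/2)) * Real.sin θ ^ γ) ^ d
          = K * (en p ^ e * en q ^ e) * h₀ ω := by
        have ha' : (0:ℝ) ≤ 6 * 2 ^ a := by positivity
        have hx' : (0:ℝ) ≤ u ^ (a/2) := Real.rpow_nonneg hu0.le _
        rw [Real.mul_rpow (mul_nonneg ha' hx') hsγ, Real.mul_rpow ha' hx']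
        have h1 : (u ^ (a/2)) ^ d = u ^ e := by
          rw [← Real.rpow_mul hu0.le]
          congr 1; rw [hedef]; ring
        have h2 : u ^ e = en p ^ e * en q ^ e := Real.mul_rpow (en_pos p).le (en_pos q).le
        have h3 : (Real.sin θ ^ γ) ^ d = h₀ ω := by
          rw [hh₀, ← Real.rpow_mul hsθ]
        rw [h1, h2, h3, hK]
      calc |moller p q * σ (relg p q) θ| ^ d * Real.exp (-c * en q)
          ≤ (((6 * 2 ^ a * u ^ (a/2)) * Real.sin θ ^ γ) ^ d) * Real.exp (-c * en q) :=
            mul_le_mul_of_nonneg_right hrpow (Real.exp_nonneg _)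
        _ = D ω := by rw [hexpand, hD, hcst]; ring
    have hmono := integral_mono_of_nonneg
      (Filter.Eventually.of_forall (fun ω : Sphere =>
        mul_nonneg (Real.rpow_nonneg (abs_nonneg _) d) (Real.exp_nonneg _)))
      hDint (Filter.Eventually.of_forall hpt)
    refine le_trans hmono ?_
    rw [hD]
    simp only []
    rw [integral_const_mul cst h₀, h₀val, hG, hcst]
    apply le_of_eq
    ring
  calc (∫ q : EuclideanSpace ℝ (Fin 3),
        ∫ ω : Sphere,
          |moller p q * σ (relg p q) (polarAngle (ω : EuclideanSpace ℝ (Fin 3)))| ^ d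
              * Real.exp (-c * en q) ∂μS)
      ≤ ∫ q, G q :=
        integral_mono_of_nonneg (Filter.Eventually.of_forall hinner_nonneg) hGint
          (Filter.Eventually.of_forall houter)
    _ = (K * J * en p ^ e) * I := by
        rw [hG]
        exact integral_const_mul (K * J * en p ^ e) fun q => en q ^ e * Real.exp (-c * en q)
    _ ≤ (K * J * I) * (1 + ‖p‖) ^ e := by
        have h1 : en p ^ e ≤ (1 + ‖p‖) ^ e :=
          Real.rpow_le_rpow (en_pos p).le (en_le p) he0
        calc (K * J * en p ^ e) * I = (K * J * I) * en p ^ e := by ring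
          _ ≤ (K * J * I) * (1 + ‖p‖) ^ e :=
            mul_le_mul_of_nonneg_left h1 (by positivity)
    _ ≤ (K * J * I + 1) * (1 + ‖p‖) ^ e := by
        apply mul_le_mul_of_nonneg_right (by linarith)
        apply Real.rpow_nonneg
        positivity
end
end
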